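/- arXiv:2106.00909 — 4 statements merged into one kernel-verified Lean document; each statement's English description precedes it below -/
import Mathlib

section
/- Let G = (V,E) be a finite simple graph, v ∈ V, and for a set S ⊆ V let d_v(S) denote the number of neighbors of v in S if v ∈ S, and 0 if v ∉ S. Then for any real p ≥ 1 and any sets S, T ⊆ V: d_v(S)^p + d_v(T)^p ≤ d_v(S ∩ T)^p + d_v(S ∪ T)^p. -/
/-- Induced degree: `d_v(S)` is the number of neighbors of `v` lying in `S`
if `v ∈ S`, and `0` otherwise. -/
noncomputable def indDeg {V : Type*} [DecidableEq V] (G : SimpleGraph V)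
    (S : Finset V) (v : V) : ℕ :=
  if v ∈ S then Nat.card {u : V // u ∈ S ∧ G.Adj v u} else 0

open Set in
lemma rpow_supermod {p a b c : ℝ} (hp : 1 ≤ p) (ha : 0 ≤ a) (hab : a ≤ b) (hac : a ≤ c) :
    b ^ p + c ^ p ≤ a ^ p + (b + c - a) ^ p := by
  set d := b + c - a with hd
  rcases eq_or_lt_of_le (hab.trans (by linarith : b ≤ d)) with h | h
  · have hb : b = a := by rw [hd] at h; linarith
    have hc : c = a := by rw [hd] at h; linarith
    rw [hb, hc, ← h]
  · have hda : 0 < d - a := by linarith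
    set l : ℝ := (d - b) / (d - a) with hl
    have hl0 : 0 ≤ l := div_nonneg (by linarith) hda.le
    have hl1 : l ≤ 1 := by rw [div_le_one hda]; linarith
    have hcvx := convexOn_rpow hp
    have h1 := hcvx.2 (mem_Ici.2 ha) (mem_Ici.2 (by linarith : (0:ℝ) ≤ d)) hl0
      (by linarith : (0:ℝ) ≤ 1 - l) (by ring)
    have h2 := hcvx.2 (mem_Ici.2 ha) (mem_Ici.2 (by linarith : (0:ℝ) ≤ d)) (by linarith : (0:ℝ) ≤ 1 - l)
      hl0 (by ring)
    have hb' : l * a + (1 - l) * d = b := by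
      field_simp [hl]
      have hl' : l * (d - a) = d - b := by rw [hl, div_mul_cancel₀ _ hda.ne']
      linear_combination (-1 : ℝ) * hl'
    have hc' : (1 - l) * a + l * d = c := by
      field_simp [hl]
      have hl' : l * (d - a) = d - b := by rw [hl, div_mul_cancel₀ _ hda.ne']
      linear_combination hl' + hd
    rw [smul_eq_mul, smul_eq_mul, smul_eq_mul, smul_eq_mul] at h1 h2
    rw [hb'] at h1
    rw [hc'] at h2
    calc b ^ p + c ^ p ≤ (l * a ^ p + (1 - l) * d ^ p) + ((1 - l) * a ^ p + l * d ^ p) :=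
          add_le_add h1 h2
      _ = a ^ p + d ^ p := by ring

lemma indDeg_eq_ncard {V : Type*} [DecidableEq V] (G : SimpleGraph V)
    (S : Finset V) (v : V) (hv : v ∈ S) :
    (indDeg G S v : ℕ) = ({u : V | u ∈ S ∧ G.Adj v u} : Set V).ncard := by
  rw [indDeg, if_pos hv]
  exact Nat.card_coe_set_eq _

theorem indDeg_rpow_supermodular {V : Type*} [Fintype V] [DecidableEq V]
    (G : SimpleGraph V) (v : V) (p : ℝ) (hp : 1 ≤ p) (S T : Finset V) :
    (indDeg G S v : ℝ) ^ p + (indDeg G T v : ℝ) ^ p ≤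
      (indDeg G (S ∩ T) v : ℝ) ^ p + (indDeg G (S ∪ T) v : ℝ) ^ p := by
  have hp0 : p ≠ 0 := by linarith
  have hzero : (0:ℝ) ^ p = 0 := Real.zero_rpow hp0
  set sS : Set V := {u : V | u ∈ S ∧ G.Adj v u} with hsS
  set sT : Set V := {u : V | u ∈ T ∧ G.Adj v u} with hsT
  have hI : ({u : V | u ∈ S ∩ T ∧ G.Adj v u} : Set V) = sS ∩ sT := by
    ext u; simp [hsS, hsT, Finset.mem_inter]; tauto
  have hU : ({u : V | u ∈ S ∪ T ∧ G.Adj v u} : Set V) = sS ∪ sT := by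
    ext u; simp [hsS, hsT, Finset.mem_union]; tauto
  by_cases hvS : v ∈ S <;> by_cases hvT : v ∈ T
  · have hvI : v ∈ S ∩ T := Finset.mem_inter.2 ⟨hvS, hvT⟩
    have hvU : v ∈ S ∪ T := Finset.mem_union.2 (Or.inl hvS)
    rw [indDeg_eq_ncard G S v hvS, indDeg_eq_ncard G T v hvT,
      indDeg_eq_ncard G (S ∩ T) v hvI, indDeg_eq_ncard G (S ∪ T) v hvU, hI, hU]
    have key := Set.ncard_union_add_ncard_inter sS sT (Set.toFinite _) (Set.toFinite _)
    have hab : (sS ∩ sT).ncard ≤ sS.ncard := Set.ncard_le_ncard Set.inter_subset_left (Set.toFinite _)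
    have hac : (sS ∩ sT).ncard ≤ sT.ncard := Set.ncard_le_ncard Set.inter_subset_right (Set.toFinite _)
    have key' : ((sS ∪ sT).ncard + (sS ∩ sT).ncard : ℝ) = (sS.ncard : ℝ) + (sT.ncard : ℝ) := by
      exact_mod_cast congrArg (Nat.cast : ℕ → ℝ) key
    have hd : ((sS ∪ sT).ncard : ℝ) = (sS.ncard : ℝ) + (sT.ncard : ℝ) - ((sS ∩ sT).ncard : ℝ) := by
      linarith
    rw [hd]
    exact rpow_supermod hp (Nat.cast_nonneg _) (Nat.cast_le.2 hab) (Nat.cast_le.2 hac)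
  · have hvI : v ∉ S ∩ T := fun h => hvT (Finset.mem_inter.1 h).2
    have hvU : v ∈ S ∪ T := Finset.mem_union.2 (Or.inl hvS)
    rw [show indDeg G T v = 0 from if_neg hvT, show indDeg G (S ∩ T) v = 0 from if_neg hvI,
      indDeg_eq_ncard G S v hvS, indDeg_eq_ncard G (S ∪ T) v hvU, hU, ← hsS]
    simp only [Nat.cast_zero, hzero]
    have : sS.ncard ≤ (sS ∪ sT).ncard := Set.ncard_le_ncard Set.subset_union_left (Set.toFinite _)
    have := Real.rpow_le_rpow (Nat.cast_nonneg _) (Nat.cast_le.2 this) (le_trans zero_le_one hp)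
    linarith
  · have hvI : v ∉ S ∩ T := fun h => hvS (Finset.mem_inter.1 h).1
    have hvU : v ∈ S ∪ T := Finset.mem_union.2 (Or.inr hvT)
    rw [show indDeg G S v = 0 from if_neg hvS, show indDeg G (S ∩ T) v = 0 from if_neg hvI,
      indDeg_eq_ncard G T v hvT, indDeg_eq_ncard G (S ∪ T) v hvU, hU, ← hsT]
    simp only [Nat.cast_zero, hzero]
    have : sT.ncard ≤ (sS ∪ sT).ncard := Set.ncard_le_ncard Set.subset_union_right (Set.toFinite _)
    have := Real.rpow_le_rpow (Nat.cast_nonneg _) (Nat.cast_le.2 this) (le_trans zero_le_one hp)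
    linarith
  · have hvI : v ∉ S ∩ T := fun h => hvS (Finset.mem_inter.1 h).1
    rw [show indDeg G S v = 0 from if_neg hvS, show indDeg G T v = 0 from if_neg hvT,
      show indDeg G (S ∩ T) v = 0 from if_neg hvI]
    simp only [Nat.cast_zero, hzero]
    have := Real.rpow_nonneg (Nat.cast_nonneg (indDeg G (S ∪ T) v) : (0:ℝ) ≤ _) p
    linarith
end

section
/- Let G = (V,E) be a finite simple graph and p ≥ 1 a real number. The function h(S) = Σ_{v∈S} d_v(S)^p on subsets S ⊆ V is supermodular: h(S) + h(T) ≤ h(S∩T) + h(S∪T) for all S, T ⊆ V. -/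
lemma rpow_convex_combo {p : ℝ} (hp : 1 ≤ p) {m a b M : ℝ} (hm : 0 ≤ m)
    (hma : m ≤ a) (hmb : m ≤ b) (haM : a ≤ M) (hsum : a + b = m + M) :
    a ^ p + b ^ p ≤ m ^ p + M ^ p := by
  rcases eq_or_lt_of_le (le_trans hma haM : m ≤ M) with h | h
  · have ha : a = m := le_antisymm (h ▸ haM) hma
    have hb : b = m := by linarith
    rw [ha, hb, h]
  · set lam : ℝ := (M - a) / (M - m) with hlam
    have hMm : 0 < M - m := by linarith
    have hl0 : 0 ≤ lam := div_nonneg (by linarith) hMm.le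
    have hl1 : lam ≤ 1 := (div_le_one hMm).2 (by linarith)
    have hconv := convexOn_rpow hp
    have hmem : m ∈ Set.Ici (0:ℝ) := hm
    have hMmem : M ∈ Set.Ici (0:ℝ) := by simp [Set.mem_Ici]; linarith
    have h1 : a ^ p ≤ lam * m ^ p + (1 - lam) * M ^ p := by
      have := hconv.2 hmem hMmem hl0 (by linarith : (0:ℝ) ≤ 1 - lam) (by ring)
      have hl : lam * (M - m) = M - a := div_mul_cancel₀ _ hMm.ne'
      have heq : lam • m + (1 - lam) • M = a := by
        simp only [smul_eq_mul]
        linear_combination -hl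
      rw [heq] at this
      simpa [smul_eq_mul] using this
    have h2 : b ^ p ≤ (1 - lam) * m ^ p + lam * M ^ p := by
      have := hconv.2 hmem hMmem (by linarith : (0:ℝ) ≤ 1 - lam) hl0 (by ring)
      have hl : lam * (M - m) = M - a := div_mul_cancel₀ _ hMm.ne'
      have heq : (1 - lam) • m + lam • M = b := by
        simp only [smul_eq_mul]
        linear_combination hl - hsum
      rw [heq] at this
      simpa [smul_eq_mul] using this
    linarith

lemma indDeg_eq_filter {V : Type*} [Fintype V] [DecidableEq V] (G : SimpleGraph V)
    [DecidableRel G.Adj] (S : Finset V) {v : V} (hv : v ∈ S) :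
    indDeg G S v = (S.filter (G.Adj v)).card := by
  rw [indDeg, if_pos hv, Nat.card_eq_fintype_card, Fintype.card_subtype]
  congr 1
  ext u
  simp [and_comm]

theorem sum_indDeg_rpow_supermodular {V : Type*} [Fintype V] [DecidableEq V]
    (G : SimpleGraph V) (p : ℝ) (hp : 1 ≤ p) (S T : Finset V) :
    (∑ v ∈ S, (indDeg G S v : ℝ) ^ p) + (∑ v ∈ T, (indDeg G T v : ℝ) ^ p) ≤
      (∑ v ∈ S ∩ T, (indDeg G (S ∩ T) v : ℝ) ^ p) +
        (∑ v ∈ S ∪ T, (indDeg G (S ∪ T) v : ℝ) ^ p) := by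
  classical
  have hp0 : p ≠ 0 := by positivity
  have hzero : (0:ℝ) ^ p = 0 := Real.zero_rpow hp0
  -- indDeg vanishes off the set, so extend all sums to S ∪ T
  have hext : ∀ (U : Finset V), U ⊆ S ∪ T →
      (∑ v ∈ U, (indDeg G U v : ℝ) ^ p) = ∑ v ∈ S ∪ T, (indDeg G U v : ℝ) ^ p := by
    intro U hU
    apply Finset.sum_subset hU
    intro v _ hv
    rw [indDeg, if_neg hv]
    simpa using hzero
  rw [hext S Finset.subset_union_left, hext T Finset.subset_union_right,
    hext (S ∩ T) (le_trans Finset.inter_subset_left Finset.subset_union_left)]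
  calc (∑ v ∈ S ∪ T, (indDeg G S v : ℝ) ^ p) + ∑ v ∈ S ∪ T, (indDeg G T v : ℝ) ^ p
      = ∑ v ∈ S ∪ T, ((indDeg G S v : ℝ) ^ p + (indDeg G T v : ℝ) ^ p) :=
        Finset.sum_add_distrib.symm
    _ ≤ ∑ v ∈ S ∪ T, ((indDeg G (S ∩ T) v : ℝ) ^ p + (indDeg G (S ∪ T) v : ℝ) ^ p) := ?_
    _ = (∑ v ∈ S ∪ T, (indDeg G (S ∩ T) v : ℝ) ^ p) +
          ∑ v ∈ S ∪ T, (indDeg G (S ∪ T) v : ℝ) ^ p := Finset.sum_add_distrib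
  apply Finset.sum_le_sum
  intro v hv
  set dS := (S.filter (G.Adj v)).card with hdS
  set dT := (T.filter (G.Adj v)).card with hdT
  set dI := ((S ∩ T).filter (G.Adj v)).card with hdI
  set dU := ((S ∪ T).filter (G.Adj v)).card with hdU
  have hIS : dI ≤ dS := Finset.card_le_card
    (Finset.filter_subset_filter _ Finset.inter_subset_left)
  have hIT : dI ≤ dT := Finset.card_le_card
    (Finset.filter_subset_filter _ Finset.inter_subset_right)
  have hSU : dS ≤ dU := Finset.card_le_card
    (Finset.filter_subset_filter _ Finset.subset_union_left)
  have hTU : dT ≤ dU := Finset.card_le_card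
    (Finset.filter_subset_filter _ Finset.subset_union_right)
  have hadd : dS + dT = dI + dU := by
    rw [hdS, hdT, hdI, hdU, Finset.filter_inter_distrib, Finset.filter_union]
    exact (Finset.card_inter_add_card_union _ _).symm
  have hU : indDeg G (S ∪ T) v = dU := indDeg_eq_filter G _ hv
  by_cases hvS : v ∈ S
  · by_cases hvT : v ∈ T
    · have hS' : indDeg G S v = dS := indDeg_eq_filter G _ hvS
      have hT' : indDeg G T v = dT := indDeg_eq_filter G _ hvT
      have hI' : indDeg G (S ∩ T) v = dI :=
        indDeg_eq_filter G _ (Finset.mem_inter.2 ⟨hvS, hvT⟩)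
      rw [hS', hT', hI', hU]
      exact rpow_convex_combo hp (by positivity) (by exact_mod_cast hIS)
        (by exact_mod_cast hIT) (by exact_mod_cast hSU) (by exact_mod_cast hadd)
    · have hS' : indDeg G S v = dS := indDeg_eq_filter G _ hvS
      have hT' : indDeg G T v = 0 := by rw [indDeg, if_neg hvT]
      have hI' : indDeg G (S ∩ T) v = 0 := by
        rw [indDeg, if_neg (by simp [hvT])]
      rw [hS', hT', hI', hU]
      push_cast
      rw [hzero]
      have : (dS:ℝ) ^ p ≤ (dU:ℝ) ^ p :=
        Real.rpow_le_rpow (by positivity) (by exact_mod_cast hSU) (by linarith)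
      linarith
  · have hvT : v ∈ T := by
      rcases Finset.mem_union.1 hv with h | h
      · exact absurd h hvS
      · exact h
    have hT' : indDeg G T v = dT := indDeg_eq_filter G _ hvT
    have hS' : indDeg G S v = 0 := by rw [indDeg, if_neg hvS]
    have hI' : indDeg G (S ∩ T) v = 0 := by
      rw [indDeg, if_neg (by simp [hvS])]
    rw [hS', hT', hI', hU]
    push_cast
    rw [hzero]
    have : (dT:ℝ) ^ p ≤ (dU:ℝ) ^ p :=
      Real.rpow_le_rpow (by positivity) (by exact_mod_cast hTU) (by linarith)
    linarith
end

section
/- Let G = (V,E) be a finite simple graph, p ≥ 1, and α > 0. The function ψ(S) = Σ_{v∈S} d_v(S)^p − α|S| on subsets S ⊆ V is supermodular. -/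
/-- `ψ(S) = Σ_{v∈S} d_v(S)^p − α·|S|`. -/
noncomputable def psi {V : Type*} [DecidableEq V] (G : SimpleGraph V)
    (p α : ℝ) (S : Finset V) : ℝ :=
  (∑ v ∈ S, (indDeg G S v : ℝ) ^ p) - α * S.card

open scoped Classical in
lemma indDeg_eq_card {V : Type*} [Fintype V] [DecidableEq V] (G : SimpleGraph V)
    (S : Finset V) (v : V) (hv : v ∈ S) :
    indDeg G S v = (S.filter (fun u => G.Adj v u)).card := by
  rw [indDeg, if_pos hv, Nat.card_eq_fintype_card, Fintype.card_subtype]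
  congr 1
  ext u
  simp

/-- Convexity pair inequality: if `c ≤ a, b ≤ d`, `a + b = c + d` and `f` is
convex on `[0, ∞)`, then `f a + f b ≤ f c + f d`. -/
lemma convex_pair_le {f : ℝ → ℝ} (hf : ConvexOn ℝ (Set.Ici 0) f)
    {a b c d : ℝ} (hc : 0 ≤ c) (hca : c ≤ a) (had : a ≤ d) (hcb : c ≤ b)
    (hbd : b ≤ d) (hsum : a + b = c + d) : f a + f b ≤ f c + f d := by
  rcases eq_or_lt_of_le (hca.trans had) with h | hcd
  · have ha : a = c := le_antisymm (by linarith [hca.trans had, h ▸ had]) hca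
    have hb : b = d := by linarith
    rw [ha, hb]
  · set μ : ℝ := (d - a) / (d - c) with hμdef
    have hdc : (0:ℝ) < d - c := by linarith
    have hμ0 : 0 ≤ μ := div_nonneg (by linarith) hdc.le
    have hμ1 : μ ≤ 1 := (div_le_one hdc).2 (by linarith)
    have hmem_c : c ∈ Set.Ici (0:ℝ) := hc
    have hmem_d : d ∈ Set.Ici (0:ℝ) := le_trans hc hcd.le
    have h1 : f (μ • c + (1 - μ) • d) ≤ μ • f c + (1 - μ) • f d :=
      hf.2 hmem_c hmem_d hμ0 (by linarith) (by ring)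
    have h2 : f ((1 - μ) • c + μ • d) ≤ (1 - μ) • f c + μ • f d :=
      hf.2 hmem_c hmem_d (by linarith) hμ0 (by ring)
    have ea : μ • c + (1 - μ) • d = a := by
      have key : μ * (d - c) = d - a := by rw [hμdef]; exact div_mul_cancel₀ _ hdc.ne'
      simp only [smul_eq_mul]
      linear_combination -key
    have eb : (1 - μ) • c + μ • d = b := by
      have key : μ * (d - c) = d - a := by rw [hμdef]; exact div_mul_cancel₀ _ hdc.ne'
      simp only [smul_eq_mul]
      linear_combination key - hsum
    rw [ea] at h1
    rw [eb] at h2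
    simp only [smul_eq_mul] at h1 h2
    linarith

theorem psi_supermodular {V : Type*} [Fintype V] [DecidableEq V]
    (G : SimpleGraph V) (p α : ℝ) (hp : 1 ≤ p) (hα : 0 < α) (S T : Finset V) :
    psi G p α S + psi G p α T ≤ psi G p α (S ∩ T) + psi G p α (S ∪ T) := by
  classical
  have hcard : ((S ∩ T).card : ℝ) + (S ∪ T).card = S.card + T.card := by
    have := Finset.card_inter_add_card_union S T
    exact_mod_cast congrArg (Nat.cast : ℕ → ℝ) this
  -- degree function
  set D : Finset V → V → ℝ := fun A v => ((A.filter (fun u => G.Adj v u)).card : ℝ)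
    with hD
  have hDnn : ∀ A v, 0 ≤ D A v := fun A v => Nat.cast_nonneg _
  have hDmono : ∀ {A B : Finset V} (v : V), A ⊆ B → D A v ≤ D B v := by
    intro A B v h
    simp only [hD]
    exact_mod_cast Finset.card_le_card (Finset.filter_subset_filter _ h)
  have hDmod : ∀ v, D S v + D T v = D (S ∩ T) v + D (S ∪ T) v := by
    intro v
    have : ((S.filter (fun u => G.Adj v u)) ∩ (T.filter (fun u => G.Adj v u))).card
        + ((S.filter (fun u => G.Adj v u)) ∪ (T.filter (fun u => G.Adj v u))).card
        = (S.filter (fun u => G.Adj v u)).card + (T.filter (fun u => G.Adj v u)).card :=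
      Finset.card_inter_add_card_union _ _
    have h1 : (S ∩ T).filter (fun u => G.Adj v u)
        = S.filter (fun u => G.Adj v u) ∩ T.filter (fun u => G.Adj v u) := by
      ext u; simp [Finset.mem_filter, Finset.mem_inter]; tauto
    have h2 : (S ∪ T).filter (fun u => G.Adj v u)
        = S.filter (fun u => G.Adj v u) ∪ T.filter (fun u => G.Adj v u) := by
      ext u; simp [Finset.mem_filter, Finset.mem_union]; tauto
    simp only [hD, h1, h2]
    exact_mod_cast this.symm
  have hconv := convexOn_rpow hp
  -- rewrite each sum over subsets as a sum over S ∪ T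
  have hrw : ∀ (A : Finset V), A ⊆ S ∪ T →
      (∑ v ∈ A, (indDeg G A v : ℝ) ^ p)
        = ∑ v ∈ S ∪ T, (if v ∈ A then (D A v) ^ p else 0) := by
    intro A hA
    rw [Finset.sum_ite_mem, Finset.inter_eq_right.2 hA]
    exact Finset.sum_congr rfl fun v hv => by rw [indDeg_eq_card G A v hv]
  have hsum : (∑ v ∈ S, (indDeg G S v : ℝ) ^ p) + ∑ v ∈ T, (indDeg G T v : ℝ) ^ p
      ≤ (∑ v ∈ S ∩ T, (indDeg G (S ∩ T) v : ℝ) ^ p)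
        + ∑ v ∈ S ∪ T, (indDeg G (S ∪ T) v : ℝ) ^ p := by
    rw [hrw S Finset.subset_union_left, hrw T Finset.subset_union_right,
      hrw (S ∩ T) ((Finset.inter_subset_left).trans Finset.subset_union_left),
      hrw (S ∪ T) (le_refl _), ← Finset.sum_add_distrib, ← Finset.sum_add_distrib]
    refine Finset.sum_le_sum fun v hv => ?_
    by_cases hvS : v ∈ S <;> by_cases hvT : v ∈ T
    · have hvI : v ∈ S ∩ T := Finset.mem_inter.2 ⟨hvS, hvT⟩
      have hvU : v ∈ S ∪ T := hv
      simp only [if_pos hvS, if_pos hvT, if_pos hvI, if_pos hvU]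
      exact convex_pair_le hconv (hDnn _ _)
        (hDmono v Finset.inter_subset_left) (hDmono v Finset.subset_union_left)
        (hDmono v Finset.inter_subset_right) (hDmono v Finset.subset_union_right)
        (hDmod v)
    · have hvI : v ∉ S ∩ T := fun h => hvT (Finset.mem_inter.1 h).2
      simp only [if_pos hvS, if_neg hvT, if_neg hvI, if_pos hv, add_zero, zero_add]
      exact Real.rpow_le_rpow (hDnn _ _) (hDmono v Finset.subset_union_left)
        (le_trans zero_le_one hp)
    · have hvI : v ∉ S ∩ T := fun h => hvS (Finset.mem_inter.1 h).1
      simp only [if_neg hvS, if_pos hvT, if_neg hvI, if_pos hv, add_zero, zero_add]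
      exact Real.rpow_le_rpow (hDnn _ _) (hDmono v Finset.subset_union_right)
        (le_trans zero_le_one hp)
    · exact absurd hv (by simp [hvS, hvT])
  simp only [psi]
  nlinarith [hsum, hcard, hα.le]
end

section
/- Let G = (V,E) be a finite simple graph, p ≥ 1, and S ⊆ V nonempty. Then (1/|S|)·Σ_{j∈S} Δ_j(S) ≤ (p+1)·f_p(S), where Δ_j(S) = d_j(S)^p + Σ_{i ∈ N(j)∩S, i≠j}(d_i(S)^p − (d_i(S)−1)^p) and f_p(S) = (1/|S|)Σ_{v∈S} d_v(S)^p. -/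
/-- `Δ_j(S) = d_j(S)^p + Σ_{i ∈ N(j)∩S} (d_i(S)^p − (d_i(S)−1)^p)`
(note `j ∉ N(j)` since the graph is simple). -/
noncomputable def DeltaP {V : Type*} [DecidableEq V] (G : SimpleGraph V)
    [DecidableRel G.Adj] (p : ℝ) (S : Finset V) (j : V) : ℝ :=
  (indDeg G S j : ℝ) ^ p +
    ∑ i ∈ S.filter (fun i => G.Adj j i ∧ i ≠ j),
      ((indDeg G S i : ℝ) ^ p - ((indDeg G S i : ℝ) - 1) ^ p)

/-- `f_p(S) = (1/|S|) Σ_{v∈S} d_v(S)^p`. -/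
noncomputable def fp {V : Type*} [DecidableEq V] (G : SimpleGraph V)
    (p : ℝ) (S : Finset V) : ℝ :=
  (1 / (S.card : ℝ)) * ∑ v ∈ S, (indDeg G S v : ℝ) ^ p


open Finset in
private lemma key_ineq' {p : ℝ} (hp : 1 ≤ p) {x : ℝ} (hx : 1 ≤ x) :
    x ^ p - (x - 1) ^ p ≤ p * x ^ (p - 1) := by
  have h1 : (x - 1 : ℝ) < x := by linarith
  obtain ⟨c, hc, hceq⟩ := exists_hasDerivAt_eq_slope (fun y => y ^ p)
    (fun y => p * y ^ (p - 1)) h1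
    (by
      apply ContinuousOn.rpow_const continuousOn_id
      intro y _; right; linarith)
    (fun y _ => Real.hasDerivAt_rpow_const (Or.inr hp))
  have hc0 : 0 ≤ c := by have := hc.1; linarith
  have : p * c ^ (p - 1) ≤ p * x ^ (p - 1) :=
    mul_le_mul_of_nonneg_left
      (Real.rpow_le_rpow hc0 hc.2.le (by linarith)) (by linarith)
  calc x ^ p - (x - 1) ^ p = p * c ^ (p - 1) := by rw [hceq]; ring
    _ ≤ p * x ^ (p - 1) := this

open Finset in
private lemma indDeg_mem' {V : Type*} [Fintype V] [DecidableEq V] (G : SimpleGraph V)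
    [DecidableRel G.Adj] {S : Finset V} {v : V} (hv : v ∈ S) :
    indDeg G S v = (S.filter (fun u => G.Adj v u)).card := by
  rw [indDeg, if_pos hv, Nat.card_eq_fintype_card, Fintype.card_subtype]
  congr 1
  ext u
  simp [and_comm]

theorem avg_DeltaP_le {V : Type*} [Fintype V] [DecidableEq V]
    (G : SimpleGraph V) [DecidableRel G.Adj] (p : ℝ) (hp : 1 ≤ p)
    (S : Finset V) (hS : S.Nonempty) :
    (1 / (S.card : ℝ)) * ∑ j ∈ S, DeltaP G p S j ≤ (p + 1) * fp G p S := by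
  classical
  open Finset in
  set g : V → ℝ := fun i => (indDeg G S i : ℝ) ^ p - ((indDeg G S i : ℝ) - 1) ^ p with hg
  have hdc : ∑ j ∈ S, ∑ i ∈ S.filter (fun i => G.Adj j i ∧ i ≠ j), g i
      = ∑ i ∈ S, (indDeg G S i : ℝ) * g i := by
    have : ∀ j ∈ S, ∑ i ∈ S.filter (fun i => G.Adj j i ∧ i ≠ j), g i
        = ∑ i ∈ S, if G.Adj j i then g i else 0 := by
      intro j _
      rw [sum_filter]
      refine sum_congr rfl fun i _ => ?_
      by_cases h : G.Adj j i
      · simp [h, h.ne']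
      · simp [h]
    rw [sum_congr rfl this, sum_comm]
    refine sum_congr rfl fun i hi => ?_
    have hfil : S.filter (fun j => G.Adj j i) = S.filter (fun j => G.Adj i j) :=
      filter_congr fun j _ => by rw [G.adj_comm]
    rw [← sum_filter, sum_const, hfil, indDeg_mem' G hi, nsmul_eq_mul]
  have hsum : ∑ j ∈ S, DeltaP G p S j
      ≤ ∑ v ∈ S, (indDeg G S v : ℝ) ^ p + p * ∑ v ∈ S, (indDeg G S v : ℝ) ^ p := by
    unfold DeltaP
    rw [sum_add_distrib, hdc, mul_sum]
    refine add_le_add le_rfl (sum_le_sum fun i hi => ?_)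
    rcases Nat.eq_zero_or_pos (indDeg G S i) with h0 | h1
    · rw [h0]
      norm_num [Real.zero_rpow (show p ≠ 0 by linarith)]
    · have hx : (1 : ℝ) ≤ (indDeg G S i : ℝ) := by exact_mod_cast h1
      have hxpos : (0 : ℝ) < (indDeg G S i : ℝ) := by linarith
      calc (indDeg G S i : ℝ) * g i
          ≤ (indDeg G S i : ℝ) * (p * (indDeg G S i : ℝ) ^ (p - 1)) := by
            exact mul_le_mul_of_nonneg_left (key_ineq' hp hx) (by linarith)
        _ = p * ((indDeg G S i : ℝ) ^ (1 : ℝ) * (indDeg G S i : ℝ) ^ (p - 1)) := by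
            rw [Real.rpow_one]; ring
        _ = p * (indDeg G S i : ℝ) ^ p := by
            rw [← Real.rpow_add hxpos]; ring_nf
  have hcard : (0 : ℝ) < S.card := by exact_mod_cast hS.card_pos
  rw [fp]
  have h := mul_le_mul_of_nonneg_left hsum (by positivity : (0:ℝ) ≤ 1 / S.card)
  calc (1 / (S.card : ℝ)) * ∑ j ∈ S, DeltaP G p S j
      ≤ (1 / (S.card : ℝ)) * (∑ v ∈ S, (indDeg G S v : ℝ) ^ p
          + p * ∑ v ∈ S, (indDeg G S v : ℝ) ^ p) := h
    _ = (p + 1) * ((1 / (S.card : ℝ)) * ∑ v ∈ S, (indDeg G S v : ℝ) ^ p) := by ring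
end
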